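/- arXiv:2005.14336 — 2 statements merged into one kernel-verified Lean document; each statement's English description precedes it below -/
import Mathlib

section
/- Let Σ be a 2-chromatic signed simple graph (χ(Σ) = 2). Then M(Σ) = m(Σ) = 1 if and only if Σ is connected and every edge of Σ is negative. -/
/-- A signed simple graph: two edge-disjoint simple graphs on the same vertex set,
the positive edges and the negative edges. -/
structure SignedGraph (V : Type*) where
  pos : SimpleGraph V
  neg : SimpleGraph V
  disjoint : ∀ a b : V, ¬ (pos.Adj a b ∧ neg.Adj a b)

/-- The color set of size `n`: `{±1, …, ±k}` if `n = 2k`, and `{0, ±1, …, ±k}` if `n = 2k+1`. -/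
noncomputable def signedColorSet (n : ℕ) : Finset ℤ :=
  if Even n then (Finset.Icc (-((n / 2 : ℕ) : ℤ)) ((n / 2 : ℕ) : ℤ)).erase 0
  else Finset.Icc (-((n / 2 : ℕ) : ℤ)) ((n / 2 : ℕ) : ℤ)

/-- A proper coloration of a signed graph using the color set of size `n`. -/
def IsProperColoration {V : Type*} (S : SignedGraph V) (n : ℕ) (κ : V → ℤ) : Prop :=
  (∀ v, κ v ∈ signedColorSet n) ∧
  (∀ a b, S.pos.Adj a b → κ a ≠ κ b) ∧
  (∀ a b, S.neg.Adj a b → κ a ≠ -κ b)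

/-- The chromatic number: the least size of a color set admitting a proper coloration. -/
noncomputable def sChromaticNumber {V : Type*} (S : SignedGraph V) : ℕ :=
  sInf {n : ℕ | ∃ κ : V → ℤ, IsProperColoration S n κ}

/-- A minimal coloration: a proper coloration using the color set of size `χ(Σ)`. -/
def IsMinimalColoration {V : Type*} (S : SignedGraph V) (κ : V → ℤ) : Prop :=
  IsProperColoration S (sChromaticNumber S) κ

/-- The deficiency of a coloration: the number of unused colors from the color set of size `n`. -/
noncomputable def sDeficiency {V : Type*} [Fintype V] (n : ℕ) (κ : V → ℤ) : ℕ :=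
  (signedColorSet n \ Finset.image κ Finset.univ).card

/-- Maximum deficiency over minimal colorations. -/
noncomputable def maxDef {V : Type*} [Fintype V] (S : SignedGraph V) : ℕ :=
  sSup {d : ℕ | ∃ κ : V → ℤ, IsMinimalColoration S κ ∧ sDeficiency (sChromaticNumber S) κ = d}

/-- Minimum deficiency over minimal colorations. -/
noncomputable def minDef {V : Type*} [Fintype V] (S : SignedGraph V) : ℕ :=
  sInf {d : ℕ | ∃ κ : V → ℤ, IsMinimalColoration S κ ∧ sDeficiency (sChromaticNumber S) κ = d}

/-- A stable cover of the positive edges: a vertex cover of `E⁺` that is stable in `Σ`. -/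
def IsStableCover {V : Type*} (S : SignedGraph V) (T : Set V) : Prop :=
  (∀ a b, S.pos.Adj a b → a ∈ T ∨ b ∈ T) ∧
  (∀ a ∈ T, ∀ b ∈ T, ¬ S.pos.Adj a b ∧ ¬ S.neg.Adj a b)

/-- An edge `ab` has exactly one endpoint in `A`. -/
def crossing {V : Type*} (A : Set V) (a b : V) : Prop := ¬ ((a ∈ A) ↔ (b ∈ A))

/-- Switching a signed graph at a vertex set `A`: the sign of every edge with exactly one
endpoint in `A` is negated. -/
def SignedGraph.switch {V : Type*} (S : SignedGraph V) (A : Set V) : SignedGraph V where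
  pos :=
    { Adj := fun a b => (S.pos.Adj a b ∧ ¬ crossing A a b) ∨ (S.neg.Adj a b ∧ crossing A a b)
      symm := by
        constructor
        intro a b h
        unfold crossing at *
        rcases h with ⟨h1, h2⟩ | ⟨h1, h2⟩
        · exact Or.inl ⟨S.pos.symm.symm _ _ h1, by tauto⟩
        · exact Or.inr ⟨S.neg.symm.symm _ _ h1, by tauto⟩
      loopless := by
        constructor
        intro a h
        rcases h with ⟨h1, _⟩ | ⟨_, h2⟩
        · exact S.pos.loopless.irrefl a h1
        · exact h2 Iff.rfl }
  neg :=
    { Adj := fun a b => (S.neg.Adj a b ∧ ¬ crossing A a b) ∨ (S.pos.Adj a b ∧ crossing A a b)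
      symm := by
        constructor
        intro a b h
        unfold crossing at *
        rcases h with ⟨h1, h2⟩ | ⟨h1, h2⟩
        · exact Or.inl ⟨S.neg.symm.symm _ _ h1, by tauto⟩
        · exact Or.inr ⟨S.pos.symm.symm _ _ h1, by tauto⟩
      loopless := by
        constructor
        intro a h
        rcases h with ⟨h1, _⟩ | ⟨_, h2⟩
        · exact S.neg.loopless.irrefl a h1
        · exact h2 Iff.rfl }
  disjoint := by
    intro a b h
    have := S.disjoint a b
    tauto

/-- General proper coloration with an arbitrary color set `C ⊆ ℤ`. -/
def IsProperWith {V : Type*} (S : SignedGraph V) (C : Set ℤ) (κ : V → ℤ) : Prop :=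
  (∀ v, κ v ∈ C) ∧
  (∀ a b, S.pos.Adj a b → κ a ≠ κ b) ∧
  (∀ a b, S.neg.Adj a b → κ a ≠ -κ b)

open Classical in
/-- The coloration switching equivalent to `κ` via `A`: negate the colors on `A`. -/
noncomputable def switchColor {V : Type*} (A : Set V) (κ : V → ℤ) : V → ℤ :=
  fun v => if v ∈ A then -κ v else κ v

/-- The adjacency of the forcing graph `F(Σ)` for the matching `m`:
a directed edge from `x` to `y` whenever `x ȳ` is a negative edge. -/
def ForcingAdj {V : Type*} (S : SignedGraph V) (m : V → V) (x y : V) : Prop :=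
  S.neg.Adj x (m y)


lemma colorset2_eq : signedColorSet 2 = {-1, 1} := by decide

lemma mem_colorset2 (x : ℤ) : x ∈ signedColorSet 2 ↔ x = 1 ∨ x = -1 := by
  simp [signedColorSet]; omega

lemma neg_edge_eq {V : Type*} {S : SignedGraph V} {κ : V → ℤ}
    (hκ : IsProperColoration S 2 κ) {a b : V} (hab : S.neg.Adj a b) : κ a = κ b := by
  have ha := (mem_colorset2 _).1 (hκ.1 a)
  have hb := (mem_colorset2 _).1 (hκ.1 b)
  have hne := hκ.2.2 a b hab
  rcases ha with ha | ha <;> rcases hb with hb | hb <;> omega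

lemma const_of_reach {V : Type*} {S : SignedGraph V} (hpos : S.pos = ⊥) {κ : V → ℤ}
    (hκ : IsProperColoration S 2 κ) {u v : V}
    (huv : (S.pos ⊔ S.neg).Reachable u v) : κ u = κ v := by
  obtain ⟨w⟩ := huv
  induction w with
  | nil => rfl
  | cons hadj p ih =>
    rcases (SimpleGraph.sup_adj _ _ _ _).1 hadj with hp | hn
    · rw [hpos] at hp; exact hp.elim
    · exact (neg_edge_eq hκ hn).trans ih

/-- For a 2-chromatic signed simple graph,
`M(Σ) = m(Σ) = 1` iff `Σ` is connected and all edges are negative. -/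
theorem two_chromatic_def_one {V : Type*} [Fintype V] (S : SignedGraph V)
    (h : sChromaticNumber S = 2) :
    (maxDef S = 1 ∧ minDef S = 1) ↔ ((S.pos ⊔ S.neg).Connected ∧ S.pos = ⊥) := by
  classical
  -- the set of proper colorations at the chromatic number level
  have hmin_iff : ∀ κ : V → ℤ, IsMinimalColoration S κ ↔ IsProperColoration S 2 κ := by
    intro κ; unfold IsMinimalColoration; rw [h]
  -- existence of a minimal coloration
  have hset_ne : {n : ℕ | ∃ κ : V → ℤ, IsProperColoration S n κ}.Nonempty := by
    by_contra hc
    rw [Set.not_nonempty_iff_eq_empty] at hc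
    have : sChromaticNumber S = 0 := by unfold sChromaticNumber; rw [hc]; exact Nat.sInf_empty
    omega
  have hex : ∃ κ : V → ℤ, IsProperColoration S 2 κ := by
    have := Nat.sInf_mem hset_ne
    rw [show sInf {n : ℕ | ∃ κ : V → ℤ, IsProperColoration S n κ} = sChromaticNumber S from rfl,
      h] at this
    exact this
  -- V is nonempty
  have hV : Nonempty V := by
    by_contra hv
    have : (0 : ℕ) ∈ {n : ℕ | ∃ κ : V → ℤ, IsProperColoration S n κ} := by
      refine ⟨fun _ => 0, fun v => absurd ⟨v⟩ hv, fun a b _ => absurd ⟨a⟩ hv,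
        fun a b _ => absurd ⟨a⟩ hv⟩
    have := Nat.sInf_le this
    rw [show sInf {n : ℕ | ∃ κ : V → ℤ, IsProperColoration S n κ} = sChromaticNumber S from rfl,
      h] at this
    omega
  -- D is the set of achieved deficiencies
  set D : Set ℕ :=
    {d : ℕ | ∃ κ : V → ℤ, IsMinimalColoration S κ ∧ sDeficiency (sChromaticNumber S) κ = d}
    with hD
  have hmemD : ∀ κ : V → ℤ, IsProperColoration S 2 κ → sDeficiency 2 κ ∈ D := by
    intro κ hκ
    exact ⟨κ, (hmin_iff κ).2 hκ, by rw [h]⟩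
  have hbddD : BddAbove D := by
    refine ⟨2, fun d hd => ?_⟩
    obtain ⟨κ, _, rfl⟩ := hd
    rw [h]
    calc (signedColorSet 2 \ Finset.image κ Finset.univ).card
        ≤ (signedColorSet 2).card := Finset.card_le_card (Finset.sdiff_subset)
      _ = 2 := by rw [colorset2_eq]; decide
  constructor
  · rintro ⟨hM, hm⟩
    -- every minimal coloration has deficiency 1
    have key : ∀ κ : V → ℤ, IsProperColoration S 2 κ → sDeficiency 2 κ = 1 := by
      intro κ hκ
      have hd := hmemD κ hκ
      have h1 : sInf D ≤ sDeficiency 2 κ := Nat.sInf_le hd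
      have h2 : sDeficiency 2 κ ≤ sSup D := le_csSup hbddD hd
      have hm' : sInf D = 1 := hm
      have hM' : sSup D = 1 := hM
      omega
    -- hence every minimal coloration is constant
    have hconst : ∀ κ : V → ℤ, IsProperColoration S 2 κ → ∃ c : ℤ, ∀ v, κ v = c := by
      intro κ hκ
      have him : Finset.image κ Finset.univ ⊆ signedColorSet 2 := by
        intro x hx
        obtain ⟨v, _, rfl⟩ := Finset.mem_image.1 hx
        exact hκ.1 v
      have hcard2 : (signedColorSet 2).card = 2 := by rw [colorset2_eq]; decide
      have hcd := key κ hκ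
      unfold sDeficiency at hcd
      rw [Finset.card_sdiff_of_subset him, hcard2] at hcd
      have hle : (Finset.image κ Finset.univ).card ≤ 2 := hcard2 ▸ Finset.card_le_card him
      have : (Finset.image κ Finset.univ).card = 1 := by omega
      obtain ⟨c, hc⟩ := Finset.card_eq_one.1 this
      refine ⟨c, fun v => ?_⟩
      have : κ v ∈ Finset.image κ Finset.univ :=
        Finset.mem_image_of_mem κ (Finset.mem_univ v)
      rw [hc, Finset.mem_singleton] at this
      exact this
    obtain ⟨κ₀, hκ₀⟩ := hex
    obtain ⟨c, hc⟩ := hconst κ₀ hκ₀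
    have hpos : S.pos = ⊥ := by
      ext a b
      simp only [SimpleGraph.bot_adj, iff_false]
      intro hab
      exact hκ₀.2.1 a b hab (by rw [hc a, hc b])
    haveI := hV
    refine ⟨SimpleGraph.Connected.mk ?_, hpos⟩
    intro u v
    by_contra hre
    set κ₁ : V → ℤ := fun w => if (S.pos ⊔ S.neg).Reachable u w then 1 else -1 with hκ₁
    have hprop : IsProperColoration S 2 κ₁ := by
      refine ⟨fun w => ?_, fun a b hab => ?_, fun a b hab => ?_⟩
      · rw [mem_colorset2, hκ₁]; simp only []; split <;> simp
      · rw [hpos] at hab; exact hab.elim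
      · have hiff : (S.pos ⊔ S.neg).Reachable u a ↔ (S.pos ⊔ S.neg).Reachable u b := by
          constructor
          · intro hr
            exact hr.trans (SimpleGraph.Adj.reachable (by simp [hab]))
          · intro hr
            exact hr.trans (SimpleGraph.Adj.reachable (by simp [hab.symm]))
        rw [hκ₁]
        simp only
        by_cases hra : (S.pos ⊔ S.neg).Reachable u a
        · rw [if_pos hra, if_pos (hiff.1 hra)]; omega
        · rw [if_neg hra, if_neg (fun hrb => hra (hiff.2 hrb))]; omega
    have hdef : sDeficiency 2 κ₁ = 0 := by
      unfold sDeficiency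
      rw [Finset.card_eq_zero, Finset.sdiff_eq_empty_iff_subset]
      intro x hx
      rw [colorset2_eq] at hx
      rcases Finset.mem_insert.1 hx with rfl | hx
      · refine Finset.mem_image.2 ⟨v, Finset.mem_univ v, ?_⟩
        rw [hκ₁]; simp only
        rw [if_neg hre]
      · rw [Finset.mem_singleton] at hx
        subst hx
        refine Finset.mem_image.2 ⟨u, Finset.mem_univ u, ?_⟩
        rw [hκ₁]; simp only
        rw [if_pos (SimpleGraph.Reachable.refl u)]
    have := key κ₁ hprop
    omega
  · rintro ⟨hconn, hpos⟩
    -- every proper 2-coloration is constant, hence deficiency 1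
    have key2 : ∀ κ : V → ℤ, IsProperColoration S 2 κ → sDeficiency 2 κ = 1 := by
      intro κ hκ
      obtain ⟨v₀⟩ := hV
      have hc : ∀ v, κ v = κ v₀ :=
        fun v => (const_of_reach hpos hκ (hconn.preconnected v v₀))
      have him : Finset.image κ Finset.univ = {κ v₀} := by
        ext x
        simp only [Finset.mem_image, Finset.mem_singleton]
        constructor
        · rintro ⟨w, _, rfl⟩; exact hc w
        · rintro rfl; exact ⟨v₀, Finset.mem_univ v₀, rfl⟩
      unfold sDeficiency
      rw [him, colorset2_eq]
      rcases (mem_colorset2 _).1 (hκ.1 v₀) with h1 | h1 <;> rw [h1] <;> decide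
    have hDeq : D = {1} := by
      ext d
      simp only [hD, Set.mem_setOf_eq, Set.mem_singleton_iff]
      constructor
      · rintro ⟨κ, hκ, rfl⟩
        rw [h]
        exact key2 κ ((hmin_iff κ).1 hκ)
      · rintro rfl
        have hprop : IsProperColoration S 2 (fun _ => (1 : ℤ)) := by
          refine ⟨fun _ => (mem_colorset2 1).2 (Or.inl rfl), fun a b hab => ?_,
            fun a b _ => by norm_num⟩
          rw [hpos] at hab; exact hab.elim
        exact ⟨fun _ => 1, (hmin_iff _).2 hprop, by rw [h]; exact key2 _ hprop⟩
    constructor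
    · show sSup D = 1
      rw [hDeq]; exact csSup_singleton 1
    · show sInf D = 1
      rw [hDeq]; exact csInf_singleton 1
end

section
/- Let Σ be a signed simple graph with odd chromatic number χ(Σ) = 2k+1, let κ be a minimal proper coloration of Σ, and suppose the color i of the color set {0, ±1,…,±k} is not used by κ. Then i ≠ 0 and at least two vertices of Σ are colored −i. -/
lemma signedColorSet_odd (k : ℕ) :
    signedColorSet (2 * k + 1) = Finset.Icc (-(k : ℤ)) (k : ℤ) := by
  have h2 : (2 * k + 1) / 2 = k := by omega
  have he : ¬ Even (2 * k + 1) := by simp [parity_simps]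
  simp [signedColorSet, he, h2]

lemma signedColorSet_even (k : ℕ) :
    signedColorSet (2 * k) = (Finset.Icc (-(k : ℤ)) (k : ℤ)).erase 0 := by
  have h2 : (2 * k) / 2 = k := by omega
  have he : Even (2 * k) := ⟨k, by ring⟩
  simp [signedColorSet, he, h2]

lemma neg_mem_signedColorSet {n : ℕ} {x : ℤ} (h : x ∈ signedColorSet n) :
    -x ∈ signedColorSet n := by
  unfold signedColorSet at h ⊢
  split at h <;> rename_i he
  · rw [if_pos he] at *
    rw [Finset.mem_erase, Finset.mem_Icc] at h ⊢
    omega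
  · rw [if_neg he] at *
    rw [Finset.mem_Icc] at h ⊢
    omega

lemma sChromaticNumber_le {V : Type*} (S : SignedGraph V) {n : ℕ} {κ : V → ℤ}
    (h : IsProperColoration S n κ) : sChromaticNumber S ≤ n :=
  Nat.sInf_le ⟨κ, h⟩

lemma proper_of_switch {V : Type*} (S : SignedGraph V) (A : Set V) (n : ℕ) (κ : V → ℤ)
    (h : IsProperColoration (S.switch A) n κ) :
    IsProperColoration S n (switchColor A κ) := by
  obtain ⟨h1, h2, h3⟩ := h
  refine ⟨?_, ?_, ?_⟩
  · intro v
    unfold switchColor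
    split
    · exact neg_mem_signedColorSet (h1 v)
    · exact h1 v
  · intro a b hab hEq
    by_cases hc : crossing A a b
    · have hd := h3 a b (Or.inr ⟨hab, hc⟩)
      unfold crossing at hc
      by_cases ha : a ∈ A <;> by_cases hb : b ∈ A <;>
        simp only [switchColor, ha, hb, if_true, if_false, ite_true, ite_false,
          if_pos, if_neg, not_false_iff] at hEq <;>
        first
          | exact hc (iff_of_true ha hb)
          | exact hc (iff_of_false ha hb)
          | omega
    · have hd := h2 a b (Or.inl ⟨hab, hc⟩)
      have hc' : (a ∈ A) ↔ (b ∈ A) := not_not.mp hc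
      by_cases ha : a ∈ A <;> by_cases hb : b ∈ A <;>
        simp only [switchColor, ha, hb, if_true, if_false, ite_true, ite_false] at hEq <;>
        first
          | omega
          | exact hb (hc'.mp ha)
          | exact ha (hc'.mpr hb)
  · intro a b hab hEq
    by_cases hc : crossing A a b
    · have hd := h2 a b (Or.inr ⟨hab, hc⟩)
      unfold crossing at hc
      by_cases ha : a ∈ A <;> by_cases hb : b ∈ A <;>
        simp only [switchColor, ha, hb, if_true, if_false, ite_true, ite_false] at hEq <;>
        first
          | exact hc (iff_of_true ha hb)
          | exact hc (iff_of_false ha hb)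
          | omega
    · have hd := h3 a b (Or.inl ⟨hab, hc⟩)
      have hc' : (a ∈ A) ↔ (b ∈ A) := not_not.mp hc
      by_cases ha : a ∈ A <;> by_cases hb : b ∈ A <;>
        simp only [switchColor, ha, hb, if_true, if_false, ite_true, ite_false] at hEq <;>
        first
          | omega
          | exact hb (hc'.mp ha)
          | exact ha (hc'.mpr hb)

/-- If `χ(Σ) = 2k + 1`, `κ` is a minimal coloration, and the color `i` of
the color set is unused, then `i ≠ 0` and at least two vertices are colored `-i`. -/
theorem unused_color_odd {V : Type*} [Fintype V] (S : SignedGraph V) (k : ℕ)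
    (h : sChromaticNumber S = 2 * k + 1)
    (κ : V → ℤ) (hκ : IsMinimalColoration S κ)
    (i : ℤ) (hi : i ∈ signedColorSet (2 * k + 1)) (hiu : ∀ v, κ v ≠ i) :
    i ≠ 0 ∧ ∃ a b : V, a ≠ b ∧ κ a = -i ∧ κ b = -i := by
  unfold IsMinimalColoration at hκ
  rw [h] at hκ
  obtain ⟨hmem, hpos, hneg⟩ := hκ
  have hik : -(k : ℤ) ≤ i ∧ i ≤ (k : ℤ) := by
    rw [signedColorSet_odd] at hi
    exact Finset.mem_Icc.mp hi
  have hbound : ∀ v, -(k : ℤ) ≤ κ v ∧ κ v ≤ (k : ℤ) := by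
    intro v
    have := hmem v
    rw [signedColorSet_odd] at this
    exact Finset.mem_Icc.mp this
  have hi0 : i ≠ 0 := by
    intro h0
    have hp2k : IsProperColoration S (2 * k) κ := by
      refine ⟨?_, hpos, hneg⟩
      intro v
      rw [signedColorSet_even, Finset.mem_erase]
      refine ⟨?_, Finset.mem_Icc.mpr (hbound v)⟩
      intro hz
      exact hiu v (by rw [hz, h0])
    have := sChromaticNumber_le S hp2k
    omega
  refine ⟨hi0, ?_⟩
  by_contra hno
  push_neg at hno
  have huniq : ∀ a b : V, κ a = -i → κ b = -i → a = b := by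
    intro a b ha hb
    by_contra hne
    exact hno a b hne ha hb
  set A : Set V := {v | κ v = 0 ∧ ∃ b, κ b = -i ∧ S.neg.Adj v b} with hA
  have hAzero : ∀ v ∈ A, κ v = 0 := fun v hv => hv.1
  set σ : V → ℤ := fun v => if κ v = 0 then i else κ v with hσ
  have hσprop : IsProperColoration (S.switch A) (2 * k) σ := by
    refine ⟨?_, ?_, ?_⟩
    · intro v
      rw [signedColorSet_even, Finset.mem_erase, Finset.mem_Icc]
      by_cases hz : κ v = 0
      · simp only [hσ, hz, ite_true, if_true, if_pos]
        exact ⟨hi0, hik⟩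
      · simp only [hσ, if_neg hz]
        exact ⟨hz, hbound v⟩
    · intro a b hab hEq
      have hab' : (S.pos.Adj a b ∧ ¬ crossing A a b) ∨ (S.neg.Adj a b ∧ crossing A a b) := hab
      simp only [hσ] at hEq
      rcases hab' with ⟨hp, hc⟩ | ⟨hn, hc⟩
      · have hd := hpos a b hp
        by_cases hza : κ a = 0 <;> by_cases hzb : κ b = 0 <;>
          simp only [hza, hzb, ite_true, ite_false, if_true, if_false, if_pos, if_neg,
            not_false_iff] at hEq
        · exact hd (hza.trans hzb.symm)
        · exact hiu b hEq.symm
        · exact hiu a hEq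
        · exact hd hEq
      · have hd := hneg a b hn
        by_cases hza : κ a = 0 <;> by_cases hzb : κ b = 0 <;>
          simp only [hza, hzb, ite_true, ite_false, if_true, if_false, if_pos, if_neg,
            not_false_iff] at hEq
        · exact hd (by rw [hza, hzb]; ring)
        · exact hiu b hEq.symm
        · exact hiu a hEq
        · exact hc (iff_of_false (fun hmemA => hza (hAzero a hmemA))
            (fun hmemA => hzb (hAzero b hmemA)))
    · intro a b hab hEq
      have hab' : (S.neg.Adj a b ∧ ¬ crossing A a b) ∨ (S.pos.Adj a b ∧ crossing A a b) := hab
      simp only [hσ] at hEq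
      rcases hab' with ⟨hn, hc⟩ | ⟨hp, hc⟩
      · have hd := hneg a b hn
        by_cases hza : κ a = 0 <;> by_cases hzb : κ b = 0 <;>
          simp only [hza, hzb, ite_true, ite_false, if_true, if_false, if_pos, if_neg,
            not_false_iff] at hEq
        · exact hd (by rw [hza, hzb]; ring)
        · -- a zero, b nonzero; hEq : i = -κ b, so κ b = -i, so a ∈ A, b ∉ A : crossing
          have hkb : κ b = -i := by omega
          have haA : a ∈ A := ⟨hza, b, hkb, hn⟩
          have hbA : b ∉ A := fun hmemA => hzb (hAzero b hmemA)
          exact hc (fun hiff => hbA (hiff.mp haA))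
        · -- b zero, a nonzero; hEq : κ a = -i, so b ∈ A, a ∉ A : crossing
          have hbA : b ∈ A := ⟨hzb, a, hEq, S.neg.symm.symm _ _ hn⟩
          have haA : a ∉ A := fun hmemA => hza (hAzero a hmemA)
          exact hc (fun hiff => haA (hiff.mpr hbA))
        · exact hd hEq
      · have hd := hpos a b hp
        by_cases hza : κ a = 0 <;> by_cases hzb : κ b = 0 <;>
          simp only [hza, hzb, ite_true, ite_false, if_true, if_false, if_pos, if_neg,
            not_false_iff] at hEq
        · -- hEq : i = -i, contra i ≠ 0
          omega
        · -- a zero, b nonzero; hEq : i = -κ b so κ b = -i; crossing forces a ∈ A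
          have hkb : κ b = -i := by omega
          have haA : a ∈ A := by
            by_contra haA
            exact hc (iff_of_false haA (fun hmemA => hzb (hAzero b hmemA)))
          obtain ⟨-, c, hc1, hc2⟩ := haA
          have : c = b := huniq c b hc1 hkb
          rw [this] at hc2
          exact S.disjoint a b ⟨hp, hc2⟩
        · -- b zero, a nonzero; hEq : κ a = -i
          have hbA : b ∈ A := by
            by_contra hbA
            exact hc (iff_of_false (fun hmemA => hza (hAzero a hmemA)) hbA)
          obtain ⟨-, c, hc1, hc2⟩ := hbA
          have : c = a := huniq c a hc1 hEq
          rw [this] at hc2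
          exact S.disjoint a b ⟨hp, S.neg.symm.symm _ _ hc2⟩
        · exact hc (iff_of_false (fun hmemA => hza (hAzero a hmemA))
            (fun hmemA => hzb (hAzero b hmemA)))
  have hfin := proper_of_switch S A (2 * k) σ hσprop
  have := sChromaticNumber_le S hfin
  omega
end
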